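/- Let J ∈ ℝ^{n×n} be invertible, Y ∈ ℝ^{n×s}, Z ∈ ℝ^{s×n}, L ∈ ℝ^{s×s} strictly lower triangular, and Σ a diagonal sign matrix. Then det(J + YΣ(I - LΣ)^{-1}Z) = det(J)·det(I - SΣ), where S = L - ZJ^{-1}Y is the Schur complement. -/
import Mathlib

/-- Determinant formula `det(J + YΣ(I-LΣ)⁻¹Z) = det(J) · det(I - SΣ)` with the
Schur complement `S = L - Z J⁻¹ Y`. -/
theorem det_absnormal_jacobian_eq_det_mul_det_schur
    (n s : ℕ) (J : Matrix (Fin n) (Fin n) ℝ) (Y : Matrix (Fin n) (Fin s) ℝ)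
    (Z : Matrix (Fin s) (Fin n) ℝ) (L : Matrix (Fin s) (Fin s) ℝ)
    (hJ : IsUnit J)
    (hL : ∀ i j : Fin s, i ≤ j → L i j = 0)
    (σ : Fin s → ℝ) (hσ : ∀ i, σ i = 1 ∨ σ i = -1 ∨ σ i = 0) :
    (J + Y * Matrix.diagonal σ * (1 - L * Matrix.diagonal σ)⁻¹ * Z).det =
      J.det * (1 - (L - Z * J⁻¹ * Y) * Matrix.diagonal σ).det := by
  set D := Matrix.diagonal σ with hD
  set N := (1 : Matrix (Fin s) (Fin s) ℝ) - L * D with hNdef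
  have hNtri : N.BlockTriangular OrderDual.toDual := by
    intro i j hij
    have hij' : (i : Fin s) < j := hij
    simp [hNdef, hD, Matrix.sub_apply, Matrix.mul_diagonal,
      Matrix.one_apply_ne hij'.ne, hL i j hij'.le]
  have hNdet : N.det = 1 := by
    rw [Matrix.det_of_lowerTriangular N hNtri]
    apply Finset.prod_eq_one
    intro i _
    simp [hNdef, hD, Matrix.sub_apply, Matrix.mul_diagonal, hL i i le_rfl]
  have hNunit' : IsUnit N.det := by rw [hNdet]; exact isUnit_one
  have hNinv : N⁻¹ * N = 1 := Matrix.nonsing_inv_mul N hNunit'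
  have hJinv : J * J⁻¹ = 1 := Matrix.mul_nonsing_inv J ((Matrix.isUnit_iff_isUnit_det J).mp hJ)
  have hNinvdet : N⁻¹.det = 1 := by
    have := Matrix.det_nonsing_inv N
    rw [hNdet] at this; simpa using this
  have key : J + Y * D * N⁻¹ * Z = J * (1 + (J⁻¹ * (Y * D * N⁻¹)) * Z) := by
    rw [Matrix.mul_add, Matrix.mul_one, ← Matrix.mul_assoc, ← Matrix.mul_assoc, hJinv,
      Matrix.one_mul, Matrix.mul_assoc]
  rw [key, Matrix.det_mul]
  congr 1
  rw [Matrix.det_one_add_mul_comm]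
  have key2 : 1 + Z * (J⁻¹ * (Y * D * N⁻¹)) = (1 - (L - Z * J⁻¹ * Y) * D) * N⁻¹ := by
    have : (1 - (L - Z * J⁻¹ * Y) * D) = N + Z * J⁻¹ * Y * D := by
      rw [hNdef]; noncomm_ring
    rw [this, Matrix.add_mul]
    have hNN : N * N⁻¹ = 1 := Matrix.mul_nonsing_inv N hNunit'
    rw [hNN]
    congr 1
    simp [Matrix.mul_assoc]
  rw [key2, Matrix.det_mul, hNinvdet, mul_one]
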